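/- Let Q be a finite set with |Q| = n ≥ 2, let a, b, c : Q → Q with b and c bijective, and let C > 0 be a real constant. Suppose: (i) a has at most 2·√(n · log n) cyclic points and the height of a is at most 2·√(n · log n); (ii) for every two ordered pairs (S₁, S₂) and (T₁, T₂) of distinct states of Q, there is a word over the letters b, c of length at most C · log n whose action maps S₁ to T₁ and S₂ to T₂; (iii) a is not injective. Then the automaton on state set Q with alphabet {a, b, c} is synchronizing, and its reset threshold is at most 2·√(n · log n) + (2·√(n · log n) − 1)·(C · log n + 1). -/

import Mathlib

/-- The action of a word (a list of letters, each acting as a function on the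
state set), applied in order: the first letter of the list acts first. -/
def wordAction {Q : Type*} (w : List (Q → Q)) (q : Q) : Q :=
  w.foldl (fun s f => f s) q

/-- A word is synchronizing if its action sends every state to one common state. -/
def IsSyncWord {Q : Type*} (w : List (Q → Q)) : Prop :=
  ∃ S : Q, ∀ T : Q, wordAction w T = S

/-- A state `s` is a cyclic point of `f` if some positive iterate of `f` fixes `s`. -/
def IsCyclicPt {Q : Type*} (f : Q → Q) (s : Q) : Prop :=
  ∃ i : ℕ, 0 < i ∧ f^[i] s = s

/-- The height of a state `T` under `f`: the smallest `i ≥ 0` such that `f^[i] T`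
is a cyclic point of `f`. -/
noncomputable def stateHeight {Q : Type*} (f : Q → Q) (T : Q) : ℕ :=
  sInf {i : ℕ | IsCyclicPt f (f^[i] T)}

/-- The height of `f`: the maximum of the heights of all states. -/
noncomputable def funcHeight {Q : Type*} [Fintype Q] (f : Q → Q) : ℕ :=
  Finset.univ.sup (stateHeight f)

/-- The reset threshold of the automaton on `Q` whose letters act by the functions
in the set `L`: the length of its shortest synchronizing word over `L`. -/
noncomputable def resetThreshold {Q : Type*} (L : Set (Q → Q)) : ℕ :=
  sInf {k : ℕ | ∃ w : List (Q → Q), (∀ f ∈ w, f ∈ L) ∧ w.length = k ∧ IsSyncWord w}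

lemma wordAction_append {Q : Type*} (w₁ w₂ : List (Q → Q)) (q : Q) :
    wordAction (w₁ ++ w₂) q = wordAction w₂ (wordAction w₁ q) := by
  simp [wordAction, List.foldl_append]

lemma wordAction_replicate {Q : Type*} (f : Q → Q) (m : ℕ) (q : Q) :
    wordAction (List.replicate m f) q = f^[m] q := by
  induction m generalizing q with
  | zero => simp [wordAction]
  | succ k ih =>
    rw [List.replicate_succ]
    show wordAction (List.replicate k f) (f q) = f^[k+1] q
    rw [ih, Function.iterate_succ_apply]

lemma cyc_iter {Q : Type*} (f : Q → Q) (s : Q) (h : IsCyclicPt f s) (k : ℕ) :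
    IsCyclicPt f (f^[k] s) := by
  induction k with
  | zero => simpa using h
  | succ m ih =>
    obtain ⟨i, hi, ht⟩ := ih
    refine ⟨i, hi, ?_⟩
    rw [Function.iterate_succ_apply']
    have h2 : f^[i] (f (f^[m] s)) = f (f^[i] (f^[m] s)) := by
      rw [← Function.iterate_succ_apply, Function.iterate_succ_apply']
    rw [h2, ht]

lemma reach_cyclic {Q : Type*} [Fintype Q] (f : Q → Q) (T : Q) :
    IsCyclicPt f (f^[funcHeight f] T) := by
  have hne : {i : ℕ | IsCyclicPt f (f^[i] T)}.Nonempty := by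
    obtain ⟨i, j, hij, heq⟩ := Fintype.exists_ne_map_eq_of_card_lt
      (fun i : Fin (Fintype.card Q + 1) => f^[(i : ℕ)] T) (by simp)
    rcases Nat.lt_or_gt_of_ne (fun h : (i:ℕ) = (j:ℕ) => hij (Fin.ext h)) with hlt | hlt
    · refine ⟨(i : ℕ), ⟨(j : ℕ) - i, by omega, ?_⟩⟩
      rw [← Function.iterate_add_apply]
      rw [show (j : ℕ) - i + i = j by omega]
      exact heq.symm
    · refine ⟨(j : ℕ), ⟨(i : ℕ) - j, by omega, ?_⟩⟩
      rw [← Function.iterate_add_apply]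
      rw [show (i : ℕ) - j + j = i by omega]
      exact heq
  have hmem : IsCyclicPt f (f^[stateHeight f T] T) := Nat.sInf_mem hne
  have hle : stateHeight f T ≤ funcHeight f := Finset.le_sup (Finset.mem_univ T)
  have : f^[funcHeight f] T = f^[funcHeight f - stateHeight f T] (f^[stateHeight f T] T) := by
    rw [← Function.iterate_add_apply, Nat.sub_add_cancel hle]
  rw [this]
  exact cyc_iter f _ hmem _

lemma collapse {Q : Type*} [Fintype Q] (a b c : Q → Q) (L : ℝ) (hL : 0 ≤ L)
    (hpairs : ∀ S₁ S₂ T₁ T₂ : Q, S₁ ≠ S₂ → T₁ ≠ T₂ →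
      ∃ w : List (Q → Q), (∀ f ∈ w, f = b ∨ f = c) ∧
        (w.length : ℝ) ≤ L ∧ wordAction w S₁ = T₁ ∧ wordAction w S₂ = T₂)
    (ha : ¬ Function.Injective a) :
    ∀ k : ℕ, ∀ S : Set Q, S.Nonempty → S.ncard ≤ k →
      ∃ w : List (Q → Q), (∀ f ∈ w, f = a ∨ f = b ∨ f = c) ∧
        (w.length : ℝ) ≤ ((k : ℝ) - 1) * (L + 1) ∧
        ∃ s0 : Q, ∀ q ∈ S, wordAction w q = s0 := by
  intro k
  induction k with
  | zero =>
    intro S hS hle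
    have : 0 < S.ncard := (Set.ncard_pos S.toFinite).2 hS
    omega
  | succ k ih =>
    intro S hS hle
    by_cases h1 : S.ncard ≤ 1
    · have hcard1 : S.ncard = 1 :=
        le_antisymm h1 ((Set.ncard_pos S.toFinite).2 hS)
      obtain ⟨s0, rfl⟩ := Set.ncard_eq_one.mp hcard1
      refine ⟨[], by simp, ?_, s0, ?_⟩
      · have hk : ((k + 1 : ℕ) : ℝ) - 1 = (k : ℝ) := by push_cast; ring
        rw [hk]
        simp only [List.length_nil, Nat.cast_zero]
        positivity
      · intro q hq
        simp only [Set.mem_singleton_iff] at hq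
        simp [wordAction, hq]
    · push_neg at h1
      obtain ⟨S1, S2, hS1, hS2, hne⟩ := (Set.one_lt_ncard_iff S.toFinite).mp h1
      obtain ⟨T1, T2, haT, hTne⟩ := Function.not_injective_iff.mp ha
      obtain ⟨w0, hw0ok, hw0len, hw0S1, hw0S2⟩ := hpairs S1 S2 T1 T2 hne hTne
      set φ := fun q => wordAction (w0 ++ [a]) q with hφ
      have hφ12 : φ S1 = φ S2 := by
        simp only [hφ, wordAction_append, hw0S1, hw0S2]
        simpa [wordAction] using haT
      have hsub : φ '' S ⊆ φ '' (S \ {S2}) := by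
        rintro _ ⟨q, hq, rfl⟩
        by_cases hq2 : q = S2
        · exact ⟨S1, ⟨hS1, by simp [hne]⟩, by rw [hφ12, hq2]⟩
        · exact ⟨q, ⟨hq, hq2⟩, rfl⟩
      have hcard' : (φ '' S).ncard ≤ k := by
        have h2 : (S \ {S2}).ncard = S.ncard - 1 :=
          Set.ncard_diff_singleton_of_mem hS2
        calc (φ '' S).ncard ≤ (φ '' (S \ {S2})).ncard :=
              Set.ncard_le_ncard hsub (Set.toFinite _)
          _ ≤ (S \ {S2}).ncard := Set.ncard_image_le (Set.toFinite _)
          _ ≤ k := by omega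
      obtain ⟨w1, hw1ok, hw1len, s0, hs0⟩ :=
        ih (φ '' S) ⟨φ S1, ⟨S1, hS1, rfl⟩⟩ hcard'
      refine ⟨(w0 ++ [a]) ++ w1, ?_, ?_, s0, ?_⟩
      · intro f hf
        simp only [List.mem_append, List.mem_singleton] at hf
        rcases hf with (hf | rfl) | hf
        · rcases hw0ok f hf with rfl | rfl
          · exact Or.inr (Or.inl rfl)
          · exact Or.inr (Or.inr rfl)
        · exact Or.inl rfl
        · exact hw1ok f hf
      · have hk1 : 1 ≤ k := by omega
        have hk1' : (1 : ℝ) ≤ (k : ℝ) := by exact_mod_cast hk1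
        simp only [List.length_append, List.length_singleton]
        push_cast
        nlinarith [hw0len, hw1len]
      · intro q hq
        rw [wordAction_append]
        exact hs0 _ ⟨q, hq, rfl⟩

/-- Let `Q` be a finite set with `|Q| = n ≥ 2`, let `a, b, c : Q → Q` with `b, c`
bijective, and let `C > 0`. Assume (i) `a` has at most `2√(n log n)` cyclic points
and height at most `2√(n log n)`; (ii) every ordered pair of distinct states can be
mapped to any other ordered pair of distinct states by a word over `b, c` of length
at most `C * log n`; (iii) `a` is not injective. Then the automaton with alphabet
`{a, b, c}` is synchronizing and its reset threshold is at most
`2√(n log n) + (2√(n log n) − 1) * (C log n + 1)`. -/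
theorem reset_threshold_bound
    (Q : Type*) [Fintype Q] (n : ℕ) (hcard : Nat.card Q = n) (hn : 2 ≤ n)
    (a b c : Q → Q) (hb : Function.Bijective b) (hc : Function.Bijective c)
    (C : ℝ) (hC : 0 < C)
    (hcyc : ({s : Q | IsCyclicPt a s}.ncard : ℝ) ≤ 2 * Real.sqrt (n * Real.log n))
    (hheight : (funcHeight a : ℝ) ≤ 2 * Real.sqrt (n * Real.log n))
    (hpairs : ∀ S₁ S₂ T₁ T₂ : Q, S₁ ≠ S₂ → T₁ ≠ T₂ →
      ∃ w : List (Q → Q), (∀ f ∈ w, f = b ∨ f = c) ∧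
        (w.length : ℝ) ≤ C * Real.log n ∧
        wordAction w S₁ = T₁ ∧ wordAction w S₂ = T₂)
    (ha : ¬ Function.Injective a) :
    (∃ w : List (Q → Q), (∀ f ∈ w, f = a ∨ f = b ∨ f = c) ∧ IsSyncWord w) ∧
      (resetThreshold {f : Q → Q | f = a ∨ f = b ∨ f = c} : ℝ) ≤
        2 * Real.sqrt (n * Real.log n) +
          (2 * Real.sqrt (n * Real.log n) - 1) * (C * Real.log n + 1) := by

  have hn1 : (1 : ℝ) < (n : ℝ) := by exact_mod_cast (by omega : 1 < n)
  have hlog : 0 < Real.log n := Real.log_pos hn1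
  have hL0 : 0 ≤ C * Real.log n := by positivity
  have hQ : Nonempty Q := by
    have hpos : 0 < Nat.card Q := by omega
    exact (Nat.card_pos_iff.mp hpos).1
  set h := funcHeight a with hh
  set S : Set Q := Set.range (a^[h]) with hSdef
  have hSsub : S ⊆ {s : Q | IsCyclicPt a s} := by
    rintro _ ⟨T, rfl⟩
    exact reach_cyclic a T
  have hSne : S.Nonempty := Set.range_nonempty _
  obtain ⟨w1, hw1ok, hw1len, s0, hs0⟩ :=
    collapse a b c (C * Real.log n) hL0 hpairs ha S.ncard S hSne le_rfl
  set u := List.replicate h a ++ w1 with hu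
  have huok : ∀ f ∈ u, f = a ∨ f = b ∨ f = c := by
    intro f hf
    rcases List.mem_append.mp hf with hf | hf
    · exact Or.inl (List.eq_of_mem_replicate hf)
    · exact hw1ok f hf
  have husync : IsSyncWord u := by
    refine ⟨s0, fun T => ?_⟩
    rw [hu, wordAction_append, wordAction_replicate]
    exact hs0 _ ⟨T, rfl⟩
  have hScard : ((S.ncard : ℝ)) ≤ 2 * Real.sqrt (n * Real.log n) := by
    have : S.ncard ≤ {s : Q | IsCyclicPt a s}.ncard :=
      Set.ncard_le_ncard hSsub (Set.toFinite _)
    calc (S.ncard : ℝ) ≤ ({s : Q | IsCyclicPt a s}.ncard : ℝ) := by exact_mod_cast this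
      _ ≤ _ := hcyc
  have hulen : (u.length : ℝ) ≤ 2 * Real.sqrt (n * Real.log n) +
      (2 * Real.sqrt (n * Real.log n) - 1) * (C * Real.log n + 1) := by
    have hlen : u.length = h + w1.length := by simp [hu]
    rw [hlen]
    push_cast
    have h2 : ((S.ncard : ℝ) - 1) * (C * Real.log n + 1) ≤
        (2 * Real.sqrt (n * Real.log n) - 1) * (C * Real.log n + 1) := by
      have : (0:ℝ) < C * Real.log n + 1 := by positivity
      nlinarith
    nlinarith [hw1len, hheight]
  refine ⟨⟨u, huok, husync⟩, ?_⟩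
  have hmem : u.length ∈ {k : ℕ | ∃ w : List (Q → Q),
      (∀ f ∈ w, f ∈ {f : Q → Q | f = a ∨ f = b ∨ f = c}) ∧ w.length = k ∧ IsSyncWord w} :=
    ⟨u, fun f hf => huok f hf, rfl, husync⟩
  have hrt : resetThreshold {f : Q → Q | f = a ∨ f = b ∨ f = c} ≤ u.length :=
    Nat.sInf_le hmem
  calc (resetThreshold {f : Q → Q | f = a ∨ f = b ∨ f = c} : ℝ)
      ≤ (u.length : ℝ) := by exact_mod_cast hrt
    _ ≤ _ := hulen
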